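/- Let P(u,v) be a non-degenerate 2×n transportation polytope and let s ∈ ℝ^{2×n} satisfy s_{1,i} − s_{2,i} ≥ s_{1,i+1} − s_{2,i+1} for all 1 ≤ i ≤ n − 1. Let F be a vertex of P(u,v) maximizing y ↦ ∑_{i,l} s_{il} y_{il} over P(u,v), and let O be a vertex of P(u,v) whose set of mixed demands is different from the set of mixed demands of F. Then there exists a vertex C adjacent to O such that supp(C) \ supp(O) ⊆ supp(F) and ∑_{i,l} s_{il} C_{il} ≥ ∑_{i,l} s_{il} O_{il}; that is, there is a non-decreasing pivot inserting an edge of supp(F). -/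

import Mathlib

/-- The m×n transportation polytope with margins u, v. -/
def TP (m n : ℕ) (u : Fin m → ℝ) (v : Fin n → ℝ) : Set (Matrix (Fin m) (Fin n) ℝ) :=
  {y | (∀ i j, 0 ≤ y i j) ∧ (∀ i, ∑ j, y i j = u i) ∧ (∀ j, ∑ i, y i j = v j)}

/-- The support of a matrix, as a set. -/
def suppS (m n : ℕ) (y : Matrix (Fin m) (Fin n) ℝ) : Set (Fin m × Fin n) :=
  {p | 0 < y p.1 p.2}

/-- The support of a matrix: the set of positions with positive entry. -/
noncomputable def suppF (m n : ℕ) (y : Matrix (Fin m) (Fin n) ℝ) : Finset (Fin m × Fin n) :=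
  Finset.univ.filter (fun p => 0 < y p.1 p.2)

/-- Non-degeneracy: every vertex has exactly m + n − 1 positive entries. -/
def NonDeg (m n : ℕ) (u : Fin m → ℝ) (v : Fin n → ℝ) : Prop :=
  ∀ y ∈ Set.extremePoints ℝ (TP m n u v), (suppF m n y).card = m + n - 1

/-- The mixed demands of a 2×n assignment: demand indices receiving positive flow
from both supplies. -/
def MixedDemands (n : ℕ) (y : Matrix (Fin 2) (Fin n) ℝ) : Set (Fin n) :=
  {j | 0 < y 0 j ∧ 0 < y 1 j}

/-- Two distinct vertices are adjacent if the segment between them is extreme in P. -/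
def AdjVert (m n : ℕ) (u : Fin m → ℝ) (v : Fin n → ℝ)
    (y z : Matrix (Fin m) (Fin n) ℝ) : Prop :=
  y ≠ z ∧ y ∈ Set.extremePoints ℝ (TP m n u v) ∧ z ∈ Set.extremePoints ℝ (TP m n u v) ∧
    IsExtreme ℝ (TP m n u v) (segment ℝ y z)

namespace S14


lemma fin2_cases (i j : Fin 2) : j = i ∨ j = 1 - i := by fin_cases i <;> fin_cases j <;> simp

lemma fin2_sub_ne (i : Fin 2) : 1 - i ≠ i := by fin_cases i <;> decide

lemma fin2_sub_sub (i : Fin 2) : 1 - (1 - i) = i := by fin_cases i <;> decide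

lemma fin2_sum (f : Fin 2 → ℝ) (i : Fin 2) : ∑ x, f x = f i + f (1 - i) := by
  fin_cases i <;> simp [Fin.sum_univ_two] <;> ring

lemma sum_pair_support {n : ℕ} (f : Fin n → ℝ) (a b : Fin n) (hab : a ≠ b)
    (h : ∀ k, k ≠ a → k ≠ b → f k = 0) : ∑ k, f k = f a + f b := by
  rw [← Finset.sum_pair hab]
  refine (Finset.sum_subset (Finset.subset_univ _) ?_).symm
  intro x _ hx
  simp only [Finset.mem_insert, Finset.mem_singleton, not_or] at hx
  exact h x hx.1 hx.2

lemma TP_convex (m n : ℕ) (u : Fin m → ℝ) (v : Fin n → ℝ) : Convex ℝ (TP m n u v) := by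
  rintro x ⟨hx0, hx1, hx2⟩ y ⟨hy0, hy1, hy2⟩ a b ha hb hab
  have happ : ∀ i j, (a • x + b • y) i j = a * x i j + b * y i j := by
    intro i j; simp [Matrix.add_apply, smul_eq_mul]
  refine ⟨fun i j => ?_, fun i => ?_, fun j => ?_⟩
  · rw [happ]
    exact add_nonneg (mul_nonneg ha (hx0 i j)) (mul_nonneg hb (hy0 i j))
  · simp only [happ, Finset.sum_add_distrib, ← Finset.mul_sum, hx1 i, hy1 i]
    linear_combination u i * hab
  · simp only [happ, Finset.sum_add_distrib, ← Finset.mul_sum, hx2 j, hy2 j]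
    linear_combination v j * hab

/-- The pivot direction: +1 at (i,l), -1 at (1-i,l), -1 at (i,j0), +1 at (1-i,j0). -/
def pw {n : ℕ} (i : Fin 2) (l j0 : Fin n) : Matrix (Fin 2) (Fin n) ℝ :=
  fun i' j' => (if j' = l then 1 else if j' = j0 then -1 else 0) * (if i' = i then 1 else -1)

lemma pw_row_sum {n : ℕ} (i i' : Fin 2) (l j0 : Fin n) (h : l ≠ j0) :
    ∑ j, pw i l j0 i' j = 0 := by
  rw [sum_pair_support _ l j0 h (fun k hk1 hk2 => by simp [pw, hk1, hk2])]
  simp only [pw, if_pos rfl, if_neg (Ne.symm h)]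
  split <;> ring

lemma pw_col_sum {n : ℕ} (i : Fin 2) (l j0 j : Fin n) : ∑ i', pw i l j0 i' j = 0 := by
  rw [fin2_sum _ i]
  simp [pw, fin2_sub_ne i]

lemma TP_shift {n : ℕ} (u : Fin 2 → ℝ) (v : Fin n → ℝ) (y : Matrix (Fin 2) (Fin n) ℝ)
    (hy : y ∈ TP 2 n u v) (i : Fin 2) (l j0 : Fin n) (hlj : l ≠ j0) (t : ℝ)
    (hpos : ∀ i' j', 0 ≤ y i' j' + t * pw i l j0 i' j') :
    y + t • pw i l j0 ∈ TP 2 n u v := by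
  obtain ⟨hy0, hy1, hy2⟩ := hy
  refine ⟨fun i' j' => by simpa [Matrix.add_apply, smul_eq_mul] using hpos i' j', fun i' => ?_, fun j => ?_⟩
  · simp only [Matrix.add_apply, Matrix.smul_apply, smul_eq_mul, Finset.sum_add_distrib,
      ← Finset.mul_sum, pw_row_sum i i' l j0 hlj, hy1 i']
    ring
  · simp only [Matrix.add_apply, Matrix.smul_apply, smul_eq_mul, Finset.sum_add_distrib,
      ← Finset.mul_sum, pw_col_sum i l j0 j, hy2 j]
    ring

lemma pw_obj {n : ℕ} (s : Matrix (Fin 2) (Fin n) ℝ) (i : Fin 2) (l j0 : Fin n)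
    (hlj : l ≠ j0) :
    ∑ i', ∑ j, s i' j * pw i l j0 i' j
      = s i l - s i j0 - s (1-i) l + s (1-i) j0 := by
  have hrow : ∀ i', ∑ j, s i' j * pw i l j0 i' j
      = (if i' = i then (1:ℝ) else -1) * (s i' l - s i' j0) := by
    intro i'
    rw [sum_pair_support _ l j0 hlj (fun k hk1 hk2 => by simp [pw, hk1, hk2])]
    simp [pw, hlj, Ne.symm hlj]
    split <;> ring
  rw [fin2_sum _ i, hrow i, hrow (1-i)]
  simp [fin2_sub_ne i]
  ring

lemma obj_shift {n : ℕ} (s y : Matrix (Fin 2) (Fin n) ℝ) (t : ℝ) (i : Fin 2) (l j0 : Fin n)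
    (hlj : l ≠ j0) :
    ∑ i', ∑ j, s i' j * (y + t • pw i l j0) i' j
      = (∑ i', ∑ j, s i' j * y i' j) + t * (s i l - s i j0 - s (1-i) l + s (1-i) j0) := by
  have happ : ∀ i' j, s i' j * (y + t • pw i l j0) i' j
      = s i' j * y i' j + t * (s i' j * pw i l j0 i' j) := by
    intro i' j; simp [Matrix.add_apply, smul_eq_mul]; ring
  simp only [happ, Finset.sum_add_distrib, ← Finset.mul_sum]
  rw [pw_obj s i l j0 hlj]



/-- If a TP-member has at most one mixed column, it is an extreme point. -/
lemma extreme_of_tree {n : ℕ} (u : Fin 2 → ℝ) (v : Fin n → ℝ) (y : Matrix (Fin 2) (Fin n) ℝ)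
    (hy : y ∈ TP 2 n u v) (j0 : Fin n)
    (hleaf : ∀ j, j ≠ j0 → y 0 j = 0 ∨ y 1 j = 0) :
    y ∈ Set.extremePoints ℝ (TP 2 n u v) := by
  refine ⟨hy, ?_⟩
  intro a ha b hb hseg
  obtain ⟨α, β, hα, hβ, hαβ, heq⟩ := hseg
  have happ : ∀ i j, α * a i j + β * b i j = y i j := by
    intro i j
    have := congrFun (congrFun heq i) j
    simpa [Matrix.add_apply, smul_eq_mul] using this
  have hzero : ∀ i j, y i j = 0 → a i j = 0 ∧ b i j = 0 := by
    intro i j h0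
    have h1 := happ i j
    rw [h0] at h1
    have ha' := ha.1 i j
    have hb' := hb.1 i j
    constructor <;> nlinarith
  have hab : a = b := by
    -- first on leaf columns
    have hcol : ∀ j, j ≠ j0 → ∀ i, a i j = b i j := by
      intro j hj i
      have hc1 : a 0 j + a 1 j = v j := by
        have := ha.2.2 j; rwa [Fin.sum_univ_two] at this
      have hc2 : b 0 j + b 1 j = v j := by
        have := hb.2.2 j; rwa [Fin.sum_univ_two] at this
      rcases hleaf j hj with h0 | h0
      · have z1 := hzero 0 j h0
        have e0 : a 0 j = b 0 j := by rw [z1.1, z1.2]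
        have e1 : a 1 j = b 1 j := by linarith [z1.1, z1.2]
        fin_cases i
        · exact e0
        · exact e1
      · have z1 := hzero 1 j h0
        have e0 : a 0 j = b 0 j := by linarith [z1.1, z1.2]
        have e1 : a 1 j = b 1 j := by rw [z1.1, z1.2]
        fin_cases i
        · exact e0
        · exact e1
    -- now the mixed column via row sums
    have hrow : ∀ i : Fin 2, a i j0 = b i j0 := by
      intro i
      have h1 : ∑ j, a i j = ∑ j, b i j := by rw [ha.2.1 i, hb.2.1 i]
      have h2 : ∑ j ∈ Finset.univ.erase j0, a i j = ∑ j ∈ Finset.univ.erase j0, b i j := by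
        apply Finset.sum_congr rfl
        intro j hj
        exact hcol j (Finset.ne_of_mem_erase hj) i
      have h3 := Finset.add_sum_erase Finset.univ (a i) (Finset.mem_univ j0)
      have h4 := Finset.add_sum_erase Finset.univ (b i) (Finset.mem_univ j0)
      linarith
    funext i j
    rcases eq_or_ne j j0 with rfl | hj
    · exact hrow i
    · exact hcol j hj i
  subst hab
  have haY : a = y := by
    funext i j
    rw [← happ i j]
    linear_combination (a i j) * hαβ.symm
  exact haY

/-- Every vertex of a nondegenerate 2×n TP has exactly one mixed column. -/
lemma vertex_structure {n : ℕ} (u : Fin 2 → ℝ) (v : Fin n → ℝ) (hv : ∀ j, 0 < v j)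
    (hnd : NonDeg 2 n u v) (y : Matrix (Fin 2) (Fin n) ℝ)
    (hy : y ∈ Set.extremePoints ℝ (TP 2 n u v)) :
    ∃ j0 : Fin n, (0 < y 0 j0 ∧ 0 < y 1 j0) ∧ ∀ j, j ≠ j0 → y 0 j = 0 ∨ y 1 j = 0 := by
  obtain ⟨hy0, hy1, hy2⟩ := hy.1
  set c : Fin n → ℕ := fun j => (if 0 < y 0 j then 1 else 0) + (if 0 < y 1 j then 1 else 0) with hc
  have hcard : ∑ j, c j = n + 1 := by
    have h1 := hnd y hy
    have h2 : (suppF 2 n y).card = ∑ j, c j := by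
      rw [suppF, Finset.card_filter, Fintype.sum_prod_type, Fin.sum_univ_two,
        ← Finset.sum_add_distrib]
    omega
  have hc1 : ∀ j, 1 ≤ c j := by
    intro j
    have hvj := hv j
    have := hy2 j
    rw [Fin.sum_univ_two] at this
    have h0 := hy0 0 j
    have h1 := hy0 1 j
    by_contra h
    simp only [hc, not_le] at h
    rcases Nat.lt_one_iff.mp h with h'
    by_cases p0 : 0 < y 0 j <;> by_cases p1 : 0 < y 1 j <;> simp [p0, p1] at h' <;> nlinarith
  have hc2 : ∀ j, c j ≤ 2 := by
    intro j; simp only [hc]; split <;> split <;> omega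
  -- existence of mixed column
  have hex : ∃ j0, c j0 = 2 := by
    by_contra h
    push_neg at h
    have : ∀ j, c j ≤ 1 := fun j => by have := hc2 j; have := h j; omega
    have : ∑ j, c j ≤ ∑ _j : Fin n, 1 := Finset.sum_le_sum (fun j _ => this j)
    simp at this
    omega
  obtain ⟨j0, hj0⟩ := hex
  have hmix : 0 < y 0 j0 ∧ 0 < y 1 j0 := by
    by_contra h
    simp only [hc] at hj0
    by_cases p0 : 0 < y 0 j0 <;> by_cases p1 : 0 < y 1 j0 <;>
      simp [p0, p1] at hj0 <;> exact h ⟨p0, p1⟩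
  refine ⟨j0, hmix, ?_⟩
  intro j hj
  by_contra h
  push_neg at h
  have hmixj : 0 < y 0 j ∧ 0 < y 1 j := by
    have h0 := hy0 0 j
    have h1 := hy0 1 j
    constructor
    · rcases lt_or_eq_of_le h0 with h' | h'
      · exact h'
      · exact absurd h'.symm h.1
    · rcases lt_or_eq_of_le h1 with h' | h'
      · exact h'
      · exact absurd h'.symm h.2
  have hcj : c j = 2 := by simp [hc, hmixj.1, hmixj.2]
  -- sum lower bound n + 2
  have hlb : ∀ k, 1 + ((if k = j0 then 1 else 0) + (if k = j then 1 else 0)) ≤ c k := by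
    intro k
    rcases eq_or_ne k j0 with rfl | h1
    · simp [hj0, Ne.symm hj]
    · rcases eq_or_ne k j with rfl | h2
      · simp [hcj, h1]
      · simpa [h1, h2] using hc1 k
  have hsum : ∑ k, (1 + ((if k = j0 then 1 else 0) + (if k = j then 1 else 0))) ≤ ∑ k, c k :=
    Finset.sum_le_sum (fun k _ => hlb k)
  rw [Finset.sum_add_distrib, Finset.sum_add_distrib] at hsum
  simp [Finset.sum_ite_eq'] at hsum
  omega



lemma or2 {P : Fin 2 → Prop} (i' : Fin 2) (h : P i') : P 0 ∨ P 1 := by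
  fin_cases i'
  · exact Or.inl h
  · exact Or.inr h

lemma pw_at_il {n : ℕ} (i : Fin 2) (l j0 : Fin n) : pw i l j0 i l = 1 := by simp [pw]
lemma pw_at_oil {n : ℕ} (i : Fin 2) (l j0 : Fin n) : pw i l j0 (1-i) l = -1 := by
  simp [pw, fin2_sub_ne i]
lemma pw_at_ij0 {n : ℕ} (i : Fin 2) (l j0 : Fin n) (h : l ≠ j0) : pw i l j0 i j0 = -1 := by
  simp [pw, Ne.symm h]
lemma pw_at_oij0 {n : ℕ} (i : Fin 2) (l j0 : Fin n) (h : l ≠ j0) : pw i l j0 (1-i) j0 = 1 := by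
  simp [pw, Ne.symm h, fin2_sub_ne i]
lemma pw_off {n : ℕ} (i i' : Fin 2) (l j0 j : Fin n) (h1 : j ≠ l) (h2 : j ≠ j0) :
    pw i l j0 i' j = 0 := by simp [pw, h1, h2]

lemma pivot {n : ℕ} (u : Fin 2 → ℝ) (v : Fin n → ℝ) (hv : ∀ j, 0 < v j)
    (O : Matrix (Fin 2) (Fin n) ℝ) (hOe : O ∈ Set.extremePoints ℝ (TP 2 n u v))
    (j0 : Fin n) (hmix : ∀ i', 0 < O i' j0)
    (hleaf : ∀ j, j ≠ j0 → O 0 j = 0 ∨ O 1 j = 0)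
    (i : Fin 2) (l : Fin n) (hl : l ≠ j0) (hOil : O i l = 0) :
    ∃ θ : ℝ, 0 < θ ∧
      AdjVert 2 n u v O (O + θ • pw i l j0) ∧
      (∀ p : Fin 2 × Fin n, 0 < (O + θ • pw i l j0) p.1 p.2 → ¬ 0 < O p.1 p.2 → p = (i, l)) := by
  obtain ⟨hO0, hO1, hO2⟩ := hOe.1
  have hO : O ∈ TP 2 n u v := hOe.1
  set θ : ℝ := min (v l) (O i j0) with hθdef
  have hθ : 0 < θ := lt_min (hv l) (hmix i)
  have hθv : θ ≤ v l := min_le_left _ _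
  have hθO : θ ≤ O i j0 := min_le_right _ _
  have hOl : O (1-i) l = v l := by
    have h := hO2 l
    rw [fin2_sum (fun i' => O i' l) i] at h
    rw [hOil] at h
    linarith
  set C : Matrix (Fin 2) (Fin n) ℝ := O + θ • pw i l j0 with hCdef
  have Capp : ∀ i' j', C i' j' = O i' j' + θ * pw i l j0 i' j' := by
    intro i' j'; simp [hCdef, Matrix.add_apply, smul_eq_mul]
  -- nonnegativity of C
  have hCpos : ∀ i' j', 0 ≤ O i' j' + θ * pw i l j0 i' j' := by
    intro i' j'
    rcases eq_or_ne j' l with hjl | hjl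
    · rcases fin2_cases i i' with h' | h'
      · rw [hjl, h', pw_at_il, hOil]; linarith
      · rw [hjl, h', pw_at_oil, hOl]; linarith
    · rcases eq_or_ne j' j0 with hjj | hjj
      · rcases fin2_cases i i' with h' | h'
        · rw [hjj, h', pw_at_ij0 i l j0 hl]; linarith
        · rw [hjj, h', pw_at_oij0 i l j0 hl]; have := hmix (1-i); linarith
      · rw [pw_off i i' l j0 j' hjl hjj]
        have := hO0 i' j'; linarith
  have hCTP : C ∈ TP 2 n u v := TP_shift u v O hO i l j0 hl θ hCpos
  -- zero positions of C off the entering edge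
  have hCzero : ∀ i' j', O i' j' = 0 → (i' ≠ i ∨ j' ≠ l) → C i' j' = 0 := by
    intro i' j' hOz hor
    rcases eq_or_ne j' l with hjl | hjl
    · have hi' : i' ≠ i := by
        rcases hor with h | h
        · exact h
        · exact absurd hjl h
      rcases fin2_cases i i' with h' | h'
      · exact absurd h' hi'
      · rw [hjl, h', hOl] at hOz; exact absurd hOz (ne_of_gt (hv l))
    · rcases eq_or_ne j' j0 with hjj | hjj
      · rw [hjj] at hOz; exact absurd hOz (ne_of_gt (hmix i'))
      · rw [Capp, pw_off i i' l j0 j' hjl hjj, hOz]; ring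
  -- the key parametrization lemma
  have key : ∀ y, y ∈ TP 2 n u v → (∀ i' j', O i' j' = 0 → (i' ≠ i ∨ j' ≠ l) → y i' j' = 0) →
      y = O + (y i l) • pw i l j0 ∧ y i l ≤ θ := by
    intro y hy hsupp
    obtain ⟨hy0, hy1, hy2⟩ := hy
    set t := y i l with ht
    have hoff : ∀ j', j' ≠ l → j' ≠ j0 → ∀ i', y i' j' = O i' j' := by
      intro j' hjl hjj i'
      have hcolY : y 0 j' + y 1 j' = v j' := by
        have := hy2 j'; rwa [Fin.sum_univ_two] at this
      have hcolO : O 0 j' + O 1 j' = v j' := by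
        have := hO2 j'; rwa [Fin.sum_univ_two] at this
      rcases hleaf j' hjj with h0 | h0
      · have hz : y 0 j' = 0 := hsupp 0 j' h0 (Or.inr hjl)
        have e0 : y 0 j' = O 0 j' := by rw [hz, h0]
        have e1 : y 1 j' = O 1 j' := by linarith
        fin_cases i'
        · exact e0
        · exact e1
      · have hz : y 1 j' = 0 := hsupp 1 j' h0 (Or.inr hjl)
        have e0 : y 0 j' = O 0 j' := by linarith
        have e1 : y 1 j' = O 1 j' := by rw [hz, h0]
        fin_cases i'
        · exact e0
        · exact e1
    have hcl : y (1-i) l = v l - t := by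
      have h := hy2 l
      rw [fin2_sum (fun i' => y i' l) i] at h
      linarith
    have hrowi : y i j0 = O i j0 - t := by
      have h1 : ∑ j, (y i j - O i j) = 0 := by
        rw [Finset.sum_sub_distrib, hy1 i, hO1 i]; ring
      have h2 : ∑ j, (y i j - O i j) = (y i l - O i l) + (y i j0 - O i j0) :=
        sum_pair_support _ l j0 hl (fun k hk1 hk2 => by rw [hoff k hk1 hk2]; ring)
      rw [hOil] at h2
      rw [h2] at h1
      linarith
    have hcj0 : y (1-i) j0 = O (1-i) j0 + t := by
      have h := hy2 j0
      rw [fin2_sum (fun i' => y i' j0) i] at h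
      have h' := hO2 j0
      rw [fin2_sum (fun i' => O i' j0) i] at h'
      linarith
    constructor
    · funext i' j'
      have happ : (O + t • pw i l j0) i' j' = O i' j' + t * pw i l j0 i' j' := by
        simp [Matrix.add_apply, smul_eq_mul]
      rw [happ]
      rcases eq_or_ne j' l with hjl | hjl
      · rcases fin2_cases i i' with h' | h'
        · rw [hjl, h', pw_at_il, hOil, ← ht]; ring
        · rw [hjl, h', pw_at_oil, hOl, hcl]; ring
      · rcases eq_or_ne j' j0 with hjj | hjj
        · rcases fin2_cases i i' with h' | h'
          · rw [hjj, h', pw_at_ij0 i l j0 hl, hrowi]; ring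
          · rw [hjj, h', pw_at_oij0 i l j0 hl, hcj0]; ring
        · rw [pw_off i i' l j0 j' hjl hjj, hoff j' hjl hjj i']; ring
    · refine le_min ?_ ?_
      · have := hy0 (1-i) l; linarith
      · have := hy0 i j0; linarith
  -- C is an extreme point
  have hCleafs : ∀ j, j ≠ (if O i j0 ≤ v l then l else j0) → C 0 j = 0 ∨ C 1 j = 0 := by
    intro j hj
    by_cases hc : O i j0 ≤ v l
    · rw [if_pos hc] at hj
      rcases eq_or_ne j j0 with hjj | hjj
      · have hcc : C i j = 0 := by
          rw [hjj, Capp, pw_at_ij0 i l j0 hl]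
          have : θ = O i j0 := min_eq_right hc
          rw [this]; ring
        exact or2 (P := fun i'' => C i'' j = 0) i hcc
      · rcases hleaf j hjj with h0 | h0
        · exact Or.inl (hCzero 0 j h0 (Or.inr hj))
        · exact Or.inr (hCzero 1 j h0 (Or.inr hj))
    · rw [if_neg hc] at hj
      rcases eq_or_ne j l with hjl | hjl
      · have hcc : C (1-i) j = 0 := by
          rw [hjl, Capp, pw_at_oil, hOl]
          have : θ = v l := min_eq_left (by linarith [not_le.mp hc])
          rw [this]; ring
        exact or2 (P := fun i'' => C i'' j = 0) (1-i) hcc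
      · rcases hleaf j hj with h0 | h0
        · exact Or.inl (hCzero 0 j h0 (Or.inr hjl))
        · exact Or.inr (hCzero 1 j h0 (Or.inr hjl))
  have hCe : C ∈ Set.extremePoints ℝ (TP 2 n u v) :=
    extreme_of_tree u v C hCTP _ hCleafs
  -- C ≠ O
  have hCO : O ≠ C := by
    intro h
    have : C i l = θ := by rw [Capp, pw_at_il, hOil]; ring
    rw [← h, hOil] at this
    exact absurd this.symm (ne_of_gt hθ)
  -- segment membership from the parametrization
  have hseg_mem : ∀ y, y ∈ TP 2 n u v →
      (∀ i' j', O i' j' = 0 → (i' ≠ i ∨ j' ≠ l) → y i' j' = 0) → y ∈ segment ℝ O C := by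
    intro y hy hsupp
    obtain ⟨hparam, hle⟩ := key y hy hsupp
    set t := y i l with ht
    have ht0 : 0 ≤ t := hy.1 i l
    refine ⟨1 - t/θ, t/θ, ?_, div_nonneg ht0 (le_of_lt hθ), by ring, ?_⟩
    · have : t/θ ≤ 1 := (div_le_one hθ).mpr hle
      linarith
    · rw [hparam]
      funext i' j'
      have hcan : t / θ * θ = t := div_mul_cancel₀ _ (ne_of_gt hθ)
      simp only [Matrix.add_apply, Matrix.smul_apply, smul_eq_mul, Capp]
      linear_combination (pw i l j0 i' j') * hcan
  -- the adjacency
  refine ⟨θ, hθ, ⟨hCO, hOe, hCe, ⟨(TP_convex 2 n u v).segment_subset hO hCTP, ?_⟩⟩, ?_⟩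
  · intro x₁ hx₁ x₂ hx₂ x hxseg hxopen
    obtain ⟨α, β, hα, hβ, hαβ, heqx⟩ := hxopen
    obtain ⟨γ, δ, hγ, hδ, hγδ, heqs⟩ := hxseg
    have hxzero : ∀ i' j', O i' j' = 0 → (i' ≠ i ∨ j' ≠ l) → x i' j' = 0 := by
      intro i' j' hOz hor
      have hCz := hCzero i' j' hOz hor
      have hpwz : θ * pw i l j0 i' j' = 0 := by
        have h' := Capp i' j'
        rw [hCz, hOz] at h'
        linarith
      have := congrFun (congrFun heqs i') j'
      simp only [Matrix.add_apply, Matrix.smul_apply, smul_eq_mul] at this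
      rw [hOz, hpwz] at this
      linarith
    have hzero12 : ∀ i' j', O i' j' = 0 → (i' ≠ i ∨ j' ≠ l) →
        x₁ i' j' = 0 ∧ x₂ i' j' = 0 := by
      intro i' j' hOz hor
      have hx := hxzero i' j' hOz hor
      have := congrFun (congrFun heqx i') j'
      simp only [Matrix.add_apply, Matrix.smul_apply, smul_eq_mul] at this
      rw [hx] at this
      have h1 := hx₁.1 i' j'
      have h2 := hx₂.1 i' j'
      constructor <;> nlinarith
    exact hseg_mem x₁ hx₁ (fun i' j' h1 h2 => (hzero12 i' j' h1 h2).1)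
  · rintro ⟨i', j'⟩ hpos hnpos
    have hOz : O i' j' = 0 := le_antisymm (not_lt.mp hnpos) (hO0 i' j')
    by_contra hne
    have hor : i' ≠ i ∨ j' ≠ l := by
      by_contra h
      push_neg at h
      exact hne (by rw [h.1, h.2])
    have hCz := hCzero i' j' hOz hor
    have hpos' : 0 < C i' j' := hpos
    exact (ne_of_gt hpos') hCz



lemma other_zero {x : Fin 2 → ℝ} {a : Fin 2} (h : x 0 = 0 ∨ x 1 = 0) (ha : 0 < x a) :
    x (1 - a) = 0 := by
  rcases h with hz | hz
  · rcases fin2_cases a 0 with h0 | h0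
    · rw [← h0] at ha; exact absurd hz (ne_of_gt ha)
    · rw [← h0]; exact hz
  · rcases fin2_cases a 1 with h1 | h1
    · rw [← h1] at ha; exact absurd hz (ne_of_gt ha)
    · rw [← h1]; exact hz

/-- Local optimality inequalities at the maximizer F. -/
lemma Fopt {n : ℕ} (u : Fin 2 → ℝ) (v : Fin n → ℝ) (s F : Matrix (Fin 2) (Fin n) ℝ)
    (hF : F ∈ TP 2 n u v)
    (hFmax : ∀ y ∈ TP 2 n u v, ∑ i, ∑ l, s i l * y i l ≤ ∑ i, ∑ l, s i l * F i l)
    (jF : Fin n) (hmixF : ∀ i', 0 < F i' jF) :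
    ∀ (a : Fin 2) (l : Fin n), 0 < F a l →
      s (1-a) l - s (1-a) jF - s a l + s a jF ≤ 0 := by
  intro a l hFal
  rcases eq_or_ne l jF with rfl | hne
  · linarith
  · set ε : ℝ := min (F a l) (F (1-a) jF) with hεdef
    have hε : 0 < ε := lt_min hFal (hmixF (1-a))
    have hε1 : ε ≤ F a l := min_le_left _ _
    have hε2 : ε ≤ F (1-a) jF := min_le_right _ _
    have hpos : ∀ i' j', 0 ≤ F i' j' + ε * pw (1-a) l jF i' j' := by
      intro i' j'
      rcases eq_or_ne j' l with hjl | hjl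
      · rcases fin2_cases (1-a) i' with h' | h'
        · rw [hjl, h', pw_at_il]
          have := hF.1 (1-a) l; linarith
        · rw [hjl, h', pw_at_oil (1-a) l jF, fin2_sub_sub]; linarith
      · rcases eq_or_ne j' jF with hjj | hjj
        · rcases fin2_cases (1-a) i' with h' | h'
          · rw [hjj, h', pw_at_ij0 (1-a) l jF hne]; linarith
          · rw [hjj, h', pw_at_oij0 (1-a) l jF hne, fin2_sub_sub]
            have := hF.1 a jF; linarith
        · rw [pw_off (1-a) i' l jF j' hjl hjj]
          have := hF.1 i' j'; linarith
    have hyTP : F + ε • pw (1-a) l jF ∈ TP 2 n u v :=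
      TP_shift u v F hF (1-a) l jF hne ε hpos
    have h := hFmax _ hyTP
    rw [obj_shift s F ε (1-a) l jF hne, fin2_sub_sub] at h
    nlinarith

/-- The key combinatorial lemma: a non-decreasing entering edge from supp F exists. -/
lemma find_candidate {n : ℕ} (u : Fin 2 → ℝ) (v : Fin n → ℝ) (hv : ∀ j, 0 < v j)
    (s O F : Matrix (Fin 2) (Fin n) ℝ) (hO : O ∈ TP 2 n u v) (hF : F ∈ TP 2 n u v)
    (jO jF : Fin n) (hne : jO ≠ jF)
    (hOmix : ∀ i', 0 < O i' jO) (hOleaf : ∀ j, j ≠ jO → O 0 j = 0 ∨ O 1 j = 0)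
    (hFmix : ∀ i', 0 < F i' jF)
    (hopt : ∀ (a : Fin 2) (l : Fin n), 0 < F a l →
      s (1-a) l - s (1-a) jF - s a l + s a jF ≤ 0) :
    ∃ (a : Fin 2) (l : Fin n), l ≠ jO ∧ O a l = 0 ∧ 0 < F a l ∧
      0 ≤ s a l - s a jO - s (1-a) l + s (1-a) jO := by
  have main : ∀ a : Fin 2, s a jO - s (1-a) jO ≤ s a jF - s (1-a) jF →
      ∃ (a : Fin 2) (l : Fin n), l ≠ jO ∧ O a l = 0 ∧ 0 < F a l ∧
        0 ≤ s a l - s a jO - s (1-a) l + s (1-a) jO := by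
    intro a hP
    by_cases hexa : ∃ l, 0 < F a l ∧ O a l = 0
    · obtain ⟨l, hFl, hOl⟩ := hexa
      have hljO : l ≠ jO := by
        intro h; rw [h] at hOl; exact (ne_of_gt (hOmix a)) hOl
      refine ⟨a, l, hljO, hOl, hFl, ?_⟩
      have h1 := hopt a l hFl
      linarith
    · push_neg at hexa
      by_cases hFjO : 0 < F a jO
      · have h1 := hopt a jO hFjO
        by_cases hexb : ∃ l, 0 < F (1-a) l ∧ O (1-a) l = 0
        · obtain ⟨l, hFl, hOl⟩ := hexb
          have hljO : l ≠ jO := by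
            intro h; rw [h] at hOl; exact (ne_of_gt (hOmix (1-a))) hOl
          refine ⟨1-a, l, hljO, hOl, hFl, ?_⟩
          have h2 := hopt (1-a) l hFl
          rw [fin2_sub_sub] at h2 ⊢
          linarith
        · push_neg at hexb
          exfalso
          have hOa : 0 < O a jF :=
            lt_of_le_of_ne (hO.1 a jF) (Ne.symm (hexa jF (hFmix a)))
          have hOb : 0 < O (1-a) jF :=
            lt_of_le_of_ne (hO.1 (1-a) jF) (Ne.symm (hexb jF (hFmix (1-a))))
          have := other_zero (x := fun i' => O i' jF) (hOleaf jF (Ne.symm hne)) hOa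
          exact (ne_of_gt hOb) this
      · exfalso
        have hFjO0 : F a jO = 0 := le_antisymm (not_lt.mp hFjO) (hF.1 a jO)
        set A : Finset (Fin n) := Finset.univ.filter (fun j => 0 < F a j) with hA
        have hFA : ∑ j ∈ A, F a j = u a := by
          rw [← hF.2.1 a]
          apply Finset.sum_subset (Finset.filter_subset _ _)
          intro j _ hj
          simp only [hA, Finset.mem_filter, Finset.mem_univ, true_and, not_lt] at hj
          exact le_antisymm hj (hF.1 a j)
        have hOA : ∑ j ∈ A, O a j ≤ u a := by
          rw [← hO.2.1 a]
          exact Finset.sum_le_sum_of_subset_of_nonneg (Finset.subset_univ _)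
            (fun j _ _ => hO.1 a j)
        have hOval : ∀ j ∈ A, O a j = v j := by
          intro j hj
          simp only [hA, Finset.mem_filter, Finset.mem_univ, true_and] at hj
          have hjO : j ≠ jO := by
            intro h; rw [h, hFjO0] at hj; exact lt_irrefl 0 hj
          have hOaj : 0 < O a j := lt_of_le_of_ne (hO.1 a j) (Ne.symm (hexa j hj))
          have hzero : O (1-a) j = 0 :=
            other_zero (x := fun i' => O i' j) (hOleaf j hjO) hOaj
          have hcol : O a j + O (1-a) j = v j := by
            have h := hO.2.2 j
            rw [fin2_sum (fun i' => O i' j) a] at h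
            exact h
          linarith
        have hlt : ∑ j ∈ A, F a j < ∑ j ∈ A, v j := by
          apply Finset.sum_lt_sum
          · intro j _
            have hcol : F a j + F (1-a) j = v j := by
              have h := hF.2.2 j
              rw [fin2_sum (fun i' => F i' j) a] at h
              exact h
            have := hF.1 (1-a) j
            linarith
          · refine ⟨jF, ?_, ?_⟩
            · simp only [hA, Finset.mem_filter, Finset.mem_univ, true_and]
              exact hFmix a
            · have hcol : F a jF + F (1-a) jF = v jF := by
                have h := hF.2.2 jF
                rw [fin2_sum (fun i' => F i' jF) a] at h
                exact h
              have := hFmix (1-a)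
              linarith
        have heq : ∑ j ∈ A, O a j = ∑ j ∈ A, v j :=
          Finset.sum_congr rfl hOval
        linarith
  rcases le_total (s 0 jO - s 1 jO) (s 0 jF - s 1 jF) with h | h
  · have e1 : (1 : Fin 2) - 0 = 1 := by decide
    apply main 0
    rw [e1]
    exact h
  · have e1 : (1 : Fin 2) - 1 = 0 := by decide
    apply main 1
    rw [e1]
    linarith


end S14

/-- if O and the s-maximal vertex F have different mixed demands, then
there is a non-decreasing pivot from O inserting only edges of supp(F). -/

theorem stmt_14 (n : ℕ) (hn : 0 < n) (u : Fin 2 → ℝ) (v : Fin n → ℝ)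
    (hu : ∀ i, 0 < u i) (hv : ∀ j, 0 < v j) (huv : ∑ i, u i = ∑ j, v j)
    (hnd : NonDeg 2 n u v)
    (s : Matrix (Fin 2) (Fin n) ℝ)
    (hs : ∀ (i : Fin n) (h : (i : ℕ) + 1 < n),
      s 0 ⟨(i : ℕ) + 1, h⟩ - s 1 ⟨(i : ℕ) + 1, h⟩ ≤ s 0 i - s 1 i)
    (F : Matrix (Fin 2) (Fin n) ℝ)
    (hFv : F ∈ Set.extremePoints ℝ (TP 2 n u v))
    (hFmax : ∀ y ∈ TP 2 n u v, ∑ i, ∑ l, s i l * y i l ≤ ∑ i, ∑ l, s i l * F i l)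
    (O : Matrix (Fin 2) (Fin n) ℝ)
    (hOv : O ∈ Set.extremePoints ℝ (TP 2 n u v))
    (hmix : MixedDemands n O ≠ MixedDemands n F) :
    ∃ C : Matrix (Fin 2) (Fin n) ℝ, AdjVert 2 n u v O C ∧
      suppS 2 n C \ suppS 2 n O ⊆ suppS 2 n F ∧
      ∑ i, ∑ l, s i l * O i l ≤ ∑ i, ∑ l, s i l * C i l := by
  obtain ⟨jO, hOmixp, hOleaf⟩ := S14.vertex_structure u v hv hnd O hOv
  obtain ⟨jF, hFmixp, hFleaf⟩ := S14.vertex_structure u v hv hnd F hFv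
  have hOmix : ∀ i', 0 < O i' jO := by
    intro i'; fin_cases i'
    · exact hOmixp.1
    · exact hOmixp.2
  have hFmix : ∀ i', 0 < F i' jF := by
    intro i'; fin_cases i'
    · exact hFmixp.1
    · exact hFmixp.2
  have hMO : MixedDemands n O = {jO} := by
    ext j
    simp only [MixedDemands, Set.mem_setOf_eq, Set.mem_singleton_iff]
    constructor
    · rintro ⟨h1, h2⟩
      by_contra h
      rcases hOleaf j h with h0 | h0
      · rw [h0] at h1; exact lt_irrefl 0 h1
      · rw [h0] at h2; exact lt_irrefl 0 h2
    · intro h; rw [h]; exact hOmixp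
  have hMF : MixedDemands n F = {jF} := by
    ext j
    simp only [MixedDemands, Set.mem_setOf_eq, Set.mem_singleton_iff]
    constructor
    · rintro ⟨h1, h2⟩
      by_contra h
      rcases hFleaf j h with h0 | h0
      · rw [h0] at h1; exact lt_irrefl 0 h1
      · rw [h0] at h2; exact lt_irrefl 0 h2
    · intro h; rw [h]; exact hFmixp
  have hne : jO ≠ jF := by
    intro h; apply hmix; rw [hMO, hMF, h]
  have hopt := S14.Fopt u v s F hFv.1 hFmax jF hFmix
  obtain ⟨a, l, hljO, hOal, hFal, hineq⟩ :=
    S14.find_candidate u v hv s O F hOv.1 hFv.1 jO jF hne hOmix hOleaf hFmix hopt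
  obtain ⟨θ, hθ, hadj, hsupp⟩ := S14.pivot u v hv O hOv jO hOmix hOleaf a l hljO hOal
  refine ⟨O + θ • S14.pw a l jO, hadj, ?_, ?_⟩
  · intro p hp
    have h1 : 0 < (O + θ • S14.pw a l jO) p.1 p.2 := hp.1
    have h2 : ¬ 0 < O p.1 p.2 := hp.2
    have hpe := hsupp p h1 h2
    rw [hpe]
    show 0 < F a l
    exact hFal
  · rw [S14.obj_shift s O θ a l jO hljO]
    nlinarith [mul_nonneg (le_of_lt hθ) hineq]
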